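/- For every real number λ with 0 < λ < 2, one has 2·F(2/3, −2/3, 4/3; 1−λ) − (2/3)·(λ+1)·F(2/3, 1/3, 4/3; 1−λ) = (2/3)·λ^{1/3}. -/

import Mathlib

open scoped BigOperators

open Polynomial Finset

/-- The Gauss hypergeometric series `F(a,b,c;z) = ∑ (a)ₙ(b)ₙ/((c)ₙ n!) zⁿ`. -/
noncomputable def hypF (a b c z : ℝ) : ℝ :=
  ∑' n : ℕ,
    (Polynomial.eval a (ascPochhammer ℝ n) * Polynomial.eval b (ascPochhammer ℝ n) /
      (Polynomial.eval c (ascPochhammer ℝ n) * (n.factorial : ℝ))) * z ^ n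

/-- coefficient of the hypergeometric series -/
noncomputable def hypCoeff (a b c : ℝ) (n : ℕ) : ℝ :=
  Polynomial.eval a (ascPochhammer ℝ n) * Polynomial.eval b (ascPochhammer ℝ n) /
      (Polynomial.eval c (ascPochhammer ℝ n) * (n.factorial : ℝ))

/-- coefficient of the binomial series for exponent 1/3 -/
noncomputable def dd (n : ℕ) : ℝ :=
  Polynomial.eval (-1/3 : ℝ) (ascPochhammer ℝ n) / (n.factorial : ℝ)

lemma pch_succ_left (x : ℝ) (n : ℕ) :
    Polynomial.eval x (ascPochhammer ℝ (n+1)) = x * Polynomial.eval (x+1) (ascPochhammer ℝ n) := by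
  rw [ascPochhammer_succ_left]
  simp [Polynomial.eval_comp]

lemma pch_abs_le {x : ℝ} (hx : |x| ≤ 1) (n : ℕ) :
    |Polynomial.eval x (ascPochhammer ℝ n)| ≤ (n.factorial : ℝ) := by
  induction n with
  | zero => simp
  | succ n ih =>
      rw [ascPochhammer_succ_eval, abs_mul, Nat.factorial_succ]
      push_cast
      have h1 : |x + (n : ℝ)| ≤ (n : ℝ) + 1 := by
        have := abs_add_le x (n : ℝ)
        have : |(n : ℝ)| = (n : ℝ) := abs_of_nonneg (by positivity)
        calc |x + (n : ℝ)| ≤ |x| + |(n : ℝ)| := abs_add_le _ _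
          _ ≤ 1 + (n : ℝ) := by rw [this]; linarith
          _ = (n : ℝ) + 1 := by ring
      calc |Polynomial.eval x (ascPochhammer ℝ n)| * |x + (n : ℝ)|
          ≤ (n.factorial : ℝ) * ((n : ℝ) + 1) :=
            mul_le_mul ih h1 (abs_nonneg _) (by positivity)
        _ = ((n : ℝ) + 1) * (n.factorial : ℝ) := by ring

lemma pch_mono {x y : ℝ} (hx : 0 < x) (hxy : x ≤ y) (n : ℕ) :
    Polynomial.eval x (ascPochhammer ℝ n) ≤ Polynomial.eval y (ascPochhammer ℝ n) := by
  induction n with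
  | zero => simp
  | succ n ih =>
      rw [ascPochhammer_succ_eval, ascPochhammer_succ_eval]
      have h1 := ascPochhammer_pos n x hx
      have h2 := ascPochhammer_pos n y (lt_of_lt_of_le hx hxy)
      have : (0:ℝ) ≤ x + n := by positivity
      apply mul_le_mul ih (by linarith) this h2.le

lemma hypCoeff_abs_le {b : ℝ} (hb : |b| ≤ 1) (n : ℕ) :
    |hypCoeff (2/3) b (4/3) n| ≤ 1 := by
  unfold hypCoeff
  have hA := ascPochhammer_pos (S := ℝ) n (2/3) (by norm_num)
  have hC := ascPochhammer_pos (S := ℝ) n (4/3) (by norm_num)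
  have hf : (0:ℝ) < (n.factorial : ℝ) := by positivity
  rw [abs_div, abs_mul, abs_mul, abs_of_pos hA, abs_of_pos hC,
    abs_of_pos hf, div_le_one (by positivity)]
  exact mul_le_mul (pch_mono (by norm_num) (by norm_num) n) (pch_abs_le hb n) (abs_nonneg _) hC.le

lemma dd_abs_le (n : ℕ) : |dd n| ≤ 1 := by
  unfold dd
  have hf : (0:ℝ) < (n.factorial : ℝ) := by positivity
  rw [abs_div, abs_of_pos hf, div_le_one hf]
  exact pch_abs_le (abs_le.mpr ⟨by norm_num, by norm_num⟩) n

lemma summable_of_abs_coeff_le_one {c : ℕ → ℝ} (hc : ∀ n, |c n| ≤ 1) {z : ℝ} (hz : |z| < 1) :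
    Summable (fun n => c n * z ^ n) := by
  apply Summable.of_norm_bounded (g := fun n => |z| ^ n)
    (summable_geometric_of_lt_one (abs_nonneg z) hz)
  intro n
  rw [Real.norm_eq_abs, abs_mul, abs_pow]
  calc |c n| * |z| ^ n ≤ 1 * |z| ^ n := by
        apply mul_le_mul_of_nonneg_right (hc n) (by positivity)
    _ = |z| ^ n := one_mul _

lemma dd_rec (n : ℕ) : ((n:ℝ)+1) * dd (n+1) = ((n : ℝ) - 1/3) * dd n := by
  unfold dd
  rw [ascPochhammer_succ_eval, Nat.factorial_succ]
  have h1 : ((n.factorial : ℝ)) ≠ 0 := by positivity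
  have h2 : ((n:ℝ)+1) ≠ 0 := by positivity
  push_cast
  field_simp
  ring

lemma dd_zero : dd 0 = 1 := by simp [dd]

lemma dd_one : dd 1 = -1/3 := by
  simp [dd, ascPochhammer_one]

lemma poly_id (x : ℝ) : ∀ N : ℕ,
    (1/3) * (∑ i ∈ range N, dd i * x^i) + (1-x) * (∑ i ∈ range N, dd i * (i * x^(i-1)))
      = -((N:ℝ) * dd N * x^(N-1))
  | 0 => by simp
  | 1 => by
      simp [dd_zero, dd_one]
      norm_num
  | (M+2) => by
      have ih := poly_id x (M+1)
      have hrec := dd_rec (M+1)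
      rw [sum_range_succ, sum_range_succ (fun i => dd i * (i * x^(i-1)))]
      push_cast at hrec ih ⊢

      linear_combination ih + x^(M+1) * hrec

lemma hasSum_binomial {z : ℝ} (hz : |z| < 1) :
    HasSum (fun n => dd n * z ^ n) ((1 - z) ^ ((1:ℝ)/3)) := by
  obtain ⟨hz1, hz2⟩ := abs_lt.mp hz
  have h1z : (0:ℝ) < 1 - z := by linarith
  have hsum : Summable (fun n => dd n * z ^ n) := summable_of_abs_coeff_le_one dd_abs_le hz
  have hT := hsum.hasSum
  -- partial sums tend to tsum
  have htend := hT.tendsto_sum_nat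
  -- the auxiliary function
  set G : ℕ → ℝ → ℝ := fun N x => (1-x) ^ (-(1:ℝ)/3) * ∑ i ∈ range N, dd i * x^i with hG
  set s : Set ℝ := Set.uIcc 0 z with hs
  set m : ℝ := min (1-z) 1 with hmdef
  have hm : 0 < m := lt_min h1z one_pos
  have hmem : ∀ x ∈ s, |x| ≤ |z| ∧ m ≤ 1 - x := by
    intro x hx
    rw [hs, Set.uIcc_eq_union] at hx
    rcases hx with hx | hx
    · rcases Set.mem_Icc.mp hx with ⟨ha, hb⟩
      constructor
      · rw [abs_of_nonneg ha]; exact le_trans hb (le_abs_self z)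
      · exact le_trans (min_le_left _ _) (by linarith)
    · rcases Set.mem_Icc.mp hx with ⟨ha, hb⟩
      constructor
      · rw [abs_of_nonpos hb]
        have := neg_abs_le z
        linarith
      · exact le_trans (min_le_right _ _) (by linarith)
  set C0 : ℝ := m ^ (-(4:ℝ)/3) with hC0def
  have hC0 : 0 < C0 := Real.rpow_pos_of_pos hm _
  -- derivative of G N
  have hderiv : ∀ (N : ℕ) (x : ℝ), 0 < 1 - x →
      HasDerivAt (G N) (-((N:ℝ) * dd N * x^(N-1)) * (1-x) ^ (-(4:ℝ)/3)) x := by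
    intro N x hx1
    have hx0 : (1 - x) ≠ 0 := hx1.ne'
    have h1 : HasDerivAt (fun y : ℝ => 1 - y) (-1) x := (hasDerivAt_id x).const_sub 1
    have h2 : HasDerivAt (fun y : ℝ => (1-y) ^ (-(1:ℝ)/3)) ((1/3) * (1-x) ^ (-(4:ℝ)/3)) x := by
      have h2' := (Real.hasDerivAt_rpow_const (x := 1-x) (p := -(1:ℝ)/3) (Or.inl hx0)).comp x h1
      refine h2'.congr_deriv ?_
      rw [show -(1:ℝ)/3 - 1 = -(4:ℝ)/3 by norm_num]
      ring
    have h3 : HasDerivAt (fun y : ℝ => ∑ i ∈ range N, dd i * y^i)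
        (∑ i ∈ range N, dd i * (i * x^(i-1))) x := by
      apply HasDerivAt.fun_sum
      intro i _
      exact (hasDerivAt_pow i x).const_mul (dd i)
    have h4 := h2.mul h3
    refine h4.congr_deriv ?_
    symm
    have e : (1-x) ^ (-(1:ℝ)/3) = (1-x)^(-(4:ℝ)/3) * (1-x) := by
      have h := Real.rpow_add hx1 (-(4:ℝ)/3) 1
      rw [Real.rpow_one] at h
      rw [← h]; norm_num
    have pid := poly_id x N
    rw [e]
    linear_combination (-((1-x):ℝ)^(-(4:ℝ)/3)) * pid
  -- the MVT bound
  have key : ∀ N : ℕ, ‖G N z - G N 0‖ ≤ ((N:ℝ) * |z|^(N-1) * C0) * ‖z - (0:ℝ)‖ := by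
    intro N
    apply (convex_uIcc (0:ℝ) z).norm_image_sub_le_of_norm_hasDerivWithin_le
      (f' := fun x => -((N:ℝ) * dd N * x^(N-1)) * (1-x) ^ (-(4:ℝ)/3))
    · intro x hx
      exact (hderiv N x (lt_of_lt_of_le hm (hmem x hx).2)).hasDerivWithinAt
    · intro x hx
      obtain ⟨hx1, hx2⟩ := hmem x hx
      have hx3 : 0 < 1 - x := lt_of_lt_of_le hm hx2
      have hb1 : (1-x) ^ (-(4:ℝ)/3) ≤ C0 :=
        Real.rpow_le_rpow_of_nonpos hm hx2 (by norm_num)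
      have hb2 : |x|^(N-1) ≤ |z|^(N-1) := pow_le_pow_left₀ (abs_nonneg x) hx1 _
      have hb3 : (0:ℝ) < (1-x) ^ (-(4:ℝ)/3) := Real.rpow_pos_of_pos hx3 _
      rw [Real.norm_eq_abs, abs_mul, abs_neg, abs_mul, abs_mul,
        abs_of_pos hb3, abs_pow]
      have hN : |(N:ℝ)| = (N:ℝ) := abs_of_nonneg (by positivity)
      rw [hN]
      calc (N:ℝ) * |dd N| * |x|^(N-1) * ((1-x) ^ (-(4:ℝ)/3))
          ≤ (N:ℝ) * 1 * |z|^(N-1) * C0 := by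
            apply mul_le_mul _ hb1 hb3.le (by positivity)
            apply mul_le_mul _ hb2 (by positivity) (by positivity)
            exact mul_le_mul_of_nonneg_left (dd_abs_le N) (by positivity)
        _ = (N:ℝ) * |z|^(N-1) * C0 := by ring
    · exact Set.left_mem_uIcc
    · exact Set.right_mem_uIcc
  have hG0 : ∀ N : ℕ, 1 ≤ N → G N 0 = 1 := by
    intro N hN
    simp only [hG]
    rw [sub_zero, Real.one_rpow, one_mul]
    rw [Finset.sum_eq_single 0]
    · simp [dd_zero]
    · intro i _ hi
      simp [zero_pow hi]
    · intro h
      exact absurd (mem_range.mpr (by omega)) h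
  have hev : ∀ᶠ N : ℕ in Filter.atTop, ‖G N z - 1‖ ≤ C0 * ((N:ℝ) * |z|^N) := by
    filter_upwards [Filter.eventually_ge_atTop 1] with N hN
    have hk := key N
    rw [hG0 N hN, sub_zero, Real.norm_eq_abs] at hk
    refine hk.trans (le_of_eq ?_)
    rcases Nat.exists_eq_add_of_le hN with ⟨M, rfl⟩
    have : (1 + M) - 1 = M := by omega
    rw [this, pow_add, pow_one, Real.norm_eq_abs]
    ring
  have h0 : Filter.Tendsto (fun N : ℕ => C0 * ((N:ℝ) * |z|^N)) Filter.atTop (nhds 0) := by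
    have hs1 := (summable_pow_mul_geometric_of_norm_lt_one (R := ℝ) 1
      (r := |z|) (by rwa [Real.norm_eq_abs, abs_abs])).tendsto_atTop_zero
    have h' : Filter.Tendsto (fun N : ℕ => (N:ℝ) * |z|^N) Filter.atTop (nhds 0) := by
      simpa using hs1
    simpa using h'.const_mul C0
  have hGz : Filter.Tendsto (fun N => G N z - 1) Filter.atTop (nhds 0) :=
    squeeze_zero_norm' hev h0
  have hGz1 : Filter.Tendsto (fun N => G N z) Filter.atTop (nhds 1) := by
    have := hGz.add_const 1
    simpa using this
  have hrel : ∀ N : ℕ, ∑ i ∈ range N, dd i * z^i = (1-z) ^ ((1:ℝ)/3) * G N z := by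
    intro N
    simp only [hG]
    rw [← mul_assoc, ← Real.rpow_add h1z]
    rw [show (1:ℝ)/3 + -(1:ℝ)/3 = 0 by norm_num, Real.rpow_zero, one_mul]
  have htend2 : Filter.Tendsto (fun N : ℕ => ∑ i ∈ range N, dd i * z ^ i)
      Filter.atTop (nhds ((1-z)^((1:ℝ)/3))) := by
    simp only [hrel]
    have := hGz1.const_mul ((1-z)^((1:ℝ)/3))
    simpa using this
  have hfin : (∑' n : ℕ, dd n * z^n) = (1-z)^((1:ℝ)/3) :=
    tendsto_nhds_unique htend htend2
  rwa [hfin] at hT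

lemma hypF_eq (a b c z : ℝ) : hypF a b c z = ∑' n : ℕ, hypCoeff a b c n * z ^ n := rfl

-- the termwise identity
lemma termwise {z : ℝ} (F : ℕ → ℝ)
    (hF0 : F 0 = 0) (hFs : ∀ m, F (m+1) = hypCoeff (2/3) (1/3) (4/3) m * z ^ m * z) :
    ∀ n, 2 * (hypCoeff (2/3) (-2/3) (4/3) n * z ^ n)
        - 4/3 * (hypCoeff (2/3) (1/3) (4/3) n * z ^ n) + 2/3 * F n
      = 2/3 * (dd n * z ^ n) := by
  intro n
  match n with
  | 0 =>
      simp [hypCoeff, dd, hF0]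
      norm_num
  | (m+1) =>
      rw [hFs m]
      unfold hypCoeff dd
      set A := Polynomial.eval (2/3 : ℝ) (ascPochhammer ℝ m) with hA
      set B := Polynomial.eval (1/3 : ℝ) (ascPochhammer ℝ m) with hB
      set C := Polynomial.eval (4/3 : ℝ) (ascPochhammer ℝ m) with hC
      have e1 : Polynomial.eval (2/3 : ℝ) (ascPochhammer ℝ (m+1)) = A * (2/3 + m) :=
        ascPochhammer_succ_eval m _
      have e2 : Polynomial.eval (-2/3 : ℝ) (ascPochhammer ℝ (m+1)) = (-2/3) * B := by
        rw [pch_succ_left, show (-2/3 : ℝ) + 1 = 1/3 by norm_num]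
      have e3 : Polynomial.eval (1/3 : ℝ) (ascPochhammer ℝ (m+1)) = B * (1/3 + m) :=
        ascPochhammer_succ_eval m _
      have e3' : Polynomial.eval (1/3 : ℝ) (ascPochhammer ℝ (m+1)) = (1/3) * C := by
        rw [pch_succ_left, show (1/3 : ℝ) + 1 = 4/3 by norm_num]
      have e4 : Polynomial.eval (4/3 : ℝ) (ascPochhammer ℝ (m+1)) = C * (4/3 + m) :=
        ascPochhammer_succ_eval m _
      have e5 : Polynomial.eval (-1/3 : ℝ) (ascPochhammer ℝ (m+1)) = (-1/3) * A := by
        rw [pch_succ_left, show (-1/3 : ℝ) + 1 = 2/3 by norm_num]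
      have hBpos : 0 < B := ascPochhammer_pos m _ (by norm_num)
      have hCpos : 0 < C := ascPochhammer_pos m _ (by norm_num)
      have hCB : C = 3 * (B * (1/3 + m)) := by
        rw [e3] at e3'; linarith
      have hfac : ((m.factorial : ℝ)) ≠ 0 := by positivity
      have hm1 : ((m:ℝ) + 1) ≠ 0 := by positivity
      have hm2 : ((1:ℝ)/3 + m) ≠ 0 := by positivity
      have hm3 : ((4:ℝ)/3 + m) ≠ 0 := by positivity
      rw [e1, e2, e3, e4, e5, Nat.factorial_succ, hCB]
      push_cast
      rw [pow_succ]
      field_simp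
      ring

theorem stmt11 (l : ℝ) (h0 : 0 < l) (h2 : l < 2) :
    2 * hypF (2 / 3) (-2 / 3) (4 / 3) (1 - l)
      - (2 / 3) * (l + 1) * hypF (2 / 3) (1 / 3) (4 / 3) (1 - l)
      = (2 / 3) * l ^ ((1 : ℝ) / 3) := by
  set z : ℝ := 1 - l with hzdef
  have hz : |z| < 1 := abs_lt.mpr ⟨by simp only [hzdef]; linarith, by simp only [hzdef]; linarith⟩
  -- summabilities and HasSum for both hypF's
  have hs1 : Summable (fun n => hypCoeff (2/3) (-2/3) (4/3) n * z ^ n) :=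
    summable_of_abs_coeff_le_one (fun n => hypCoeff_abs_le (abs_le.mpr ⟨by norm_num, by norm_num⟩) n) hz
  have hs2 : Summable (fun n => hypCoeff (2/3) (1/3) (4/3) n * z ^ n) :=
    summable_of_abs_coeff_le_one (fun n => hypCoeff_abs_le (abs_le.mpr ⟨by norm_num, by norm_num⟩) n) hz
  have h1 : HasSum (fun n => hypCoeff (2/3) (-2/3) (4/3) n * z ^ n)
      (hypF (2/3) (-2/3) (4/3) z) := by
    rw [hypF_eq]; exact hs1.hasSum
  have h2' : HasSum (fun n => hypCoeff (2/3) (1/3) (4/3) n * z ^ n)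
      (hypF (2/3) (1/3) (4/3) z) := by
    rw [hypF_eq]; exact hs2.hasSum
  -- the shifted series
  set F : ℕ → ℝ := fun n => Nat.rec 0 (fun m _ => hypCoeff (2/3) (1/3) (4/3) m * z ^ m * z) n
    with hFdef
  have hF0 : F 0 = 0 := rfl
  have hFs : ∀ m, F (m+1) = hypCoeff (2/3) (1/3) (4/3) m * z ^ m * z := fun m => rfl
  have hFsum : HasSum F (hypF (2/3) (1/3) (4/3) z * z) := by
    have hshift : HasSum (fun n => F (n + 1)) (hypF (2/3) (1/3) (4/3) z * z) := by
      have := h2'.mul_right z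
      exact this.congr_fun (fun n => ((hFs n).symm : _))
    have := (hasSum_nat_add_iff (f := F) 1).mp hshift
    simpa [hF0] using this
  -- combine
  have hcomb : HasSum
      (fun n => 2 * (hypCoeff (2/3) (-2/3) (4/3) n * z ^ n)
        - 4/3 * (hypCoeff (2/3) (1/3) (4/3) n * z ^ n) + 2/3 * F n)
      (2 * hypF (2/3) (-2/3) (4/3) z - 4/3 * hypF (2/3) (1/3) (4/3) z
        + 2/3 * (hypF (2/3) (1/3) (4/3) z * z)) :=
    ((h1.mul_left 2).sub (h2'.mul_left (4/3))).add (hFsum.mul_left (2/3))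
  have hbin : HasSum (fun n => 2/3 * (dd n * z ^ n)) (2/3 * ((1 - z) ^ ((1:ℝ)/3))) :=
    (hasSum_binomial hz).mul_left (2/3)
  have hcomb' : HasSum (fun n => 2/3 * (dd n * z ^ n))
      (2 * hypF (2/3) (-2/3) (4/3) z - 4/3 * hypF (2/3) (1/3) (4/3) z
        + 2/3 * (hypF (2/3) (1/3) (4/3) z * z)) :=
    hcomb.congr_fun (fun n => (termwise F hF0 hFs n).symm)
  have heq := hbin.unique hcomb'
  have hl : (1 : ℝ) - z = l := by simp [hzdef]
  rw [hl] at heq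
  have hz' : z = 1 - l := hzdef
  have hfeq1 : hypF (2/3) (-2/3) (4/3) z = hypF (2 / 3) (-2 / 3) (4 / 3) (1 - l) := by
    rw [hzdef]
  have hfeq2 : hypF (2/3) (1/3) (4/3) z = hypF (2 / 3) (1 / 3) (4 / 3) (1 - l) := by
    rw [hzdef]
  rw [hfeq1, hfeq2, hz'] at heq
  linarith [heq, mul_comm (hypF (2 / 3) (1 / 3) (4 / 3) (1 - l)) l]
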